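/- If a 0-1 matrix A admits a 1D voter-candidate interval explanation, then its rows and columns can be permuted (by increasing left endpoints of associated intervals) so that every 0-entry of A can be labeled L or R such that: every entry labeled L has only 0-entries, all labeled L, to its right in the same row; and every entry labeled R has only 0-entries, all labeled R, below it in the same column. -/
import Mathlib


/-- `A` admits a 1D voter-candidate interval explanation. -/
def IsVCI {n m : ℕ} (A : Fin n → Fin m → Bool) : Prop :=
  ∃ (vl vr : Fin n → ℝ) (cl cr : Fin m → ℝ),
    (∀ i, vl i ≤ vr i) ∧ (∀ j, cl j ≤ cr j) ∧
    ∀ i j, A i j = true ↔ (Set.Icc (vl i) (vr i) ∩ Set.Icc (cl j) (cr j)).Nonempty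

/-- If `A` is VCI, then after permuting rows and columns, every `0`-entry can be labeled
`L` (encoded `true`) or `R` (encoded `false`) so that every `L`-labeled entry has only
`0`-entries, all labeled `L`, to its right in its row, and every `R`-labeled entry has only
`0`-entries, all labeled `R`, below it in its column. -/
theorem vci_LR_labeling {n m : ℕ} (A : Fin n → Fin m → Bool) (hVCI : IsVCI A) :
    ∃ (ρ : Fin n ≃ Fin n) (κ : Fin m ≃ Fin m) (lab : Fin n → Fin m → Bool),
      (∀ i c, A (ρ i) (κ c) = false → lab i c = true →
        ∀ c', c < c' → A (ρ i) (κ c') = false ∧ lab i c' = true) ∧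
      (∀ i c, A (ρ i) (κ c) = false → lab i c = false →
        ∀ i', i < i' → A (ρ i') (κ c) = false ∧ lab i' c = false) := by
  obtain ⟨vl, vr, cl, cr, hv, hc, hA⟩ := hVCI
  refine ⟨Tuple.sort vl, Tuple.sort cl,
    fun i c => decide (vr (Tuple.sort vl i) < cl (Tuple.sort cl c)), ?_, ?_⟩
  · intro i c h0 hlab c' hcc'
    have hL : vr (Tuple.sort vl i) < cl (Tuple.sort cl c) := by
      simpa using hlab
    have hmono : cl (Tuple.sort cl c) ≤ cl (Tuple.sort cl c') :=
      Tuple.monotone_sort cl hcc'.le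
    have hL' : vr (Tuple.sort vl i) < cl (Tuple.sort cl c') := lt_of_lt_of_le hL hmono
    constructor
    · rw [← Bool.not_eq_true, hA]
      rintro ⟨x, ⟨_, hx2⟩, ⟨hx3, _⟩⟩
      exact absurd (le_trans hx3 hx2) (not_le.2 hL')
    · simpa using hL'
  · intro i c h0 hlab i' hii'
    have hnL : ¬ vr (Tuple.sort vl i) < cl (Tuple.sort cl c) := by
      simpa using hlab
    have hR : cr (Tuple.sort cl c) < vl (Tuple.sort vl i) := by
      by_contra hnR
      push_neg at hnR
      have : A (Tuple.sort vl i) (Tuple.sort cl c) = true := by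
        rw [hA]
        refine ⟨max (vl (Tuple.sort vl i)) (cl (Tuple.sort cl c)),
          ⟨le_max_left _ _, ?_⟩, ⟨le_max_right _ _, ?_⟩⟩
        · exact max_le (hv _) (not_lt.1 hnL)
        · exact max_le hnR (hc _)
      simp [this] at h0
    have hmono : vl (Tuple.sort vl i) ≤ vl (Tuple.sort vl i') :=
      Tuple.monotone_sort vl hii'.le
    have hR' : cr (Tuple.sort cl c) < vl (Tuple.sort vl i') := lt_of_lt_of_le hR hmono
    constructor
    · rw [← Bool.not_eq_true, hA]
      rintro ⟨x, ⟨hx1, _⟩, ⟨_, hx4⟩⟩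
      exact absurd (le_trans hx1 hx4) (not_le.2 hR')
    · simp only [decide_eq_false_iff_not, not_lt]
      exact le_trans (le_trans (hc _) hR'.le) (hv _)
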